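/- Short-time theorem for the exciton-polariton system, regime B with α = 0 and C₁ = 0: with initial data φ(0) = φ̃(0) = φ₀ (‖φ₀‖_{H^s} = M), ψ(0) = ψ̃(0) = 0, where φ̃ solves the linear exciton system B, the relative error satisfies ‖φ̃(t) − φ(t)‖_{H^s}/‖φ(t)‖_{H^s} ≤ (1/(p+2))|g|K_p γ^{p+1} M^{p−1} C₂^{p+2} ε + o(ε) for 0 ≤ t ≤ C₂ε^{1/(p+2)}, as ε → 0. -/

import Mathlib

open Set MeasureTheory Filter
open intervalIntegral

lemma EP_int_le_const {f : ℝ → ℝ} {s K : ℝ} (hs : 0 ≤ s) (hf : IntervalIntegrable f volume 0 s)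
    (h : ∀ τ ∈ Icc (0:ℝ) s, f τ ≤ K) : ∫ τ in (0:ℝ)..s, f τ ≤ s * K := by
  have := integral_mono_on hs hf intervalIntegrable_const h
  simpa [smul_eq_mul] using this

lemma EP_subIcc {δ t : ℝ} (ht : t ∈ Icc (0:ℝ) δ) : uIcc (0:ℝ) t ⊆ Icc 0 δ := by
  rw [uIcc_of_le ht.1]; exact Icc_subset_Icc le_rfl ht.2

lemma EP_abound {γ M K δ τ v w : ℝ} (hγ : 0 ≤ γ) (hK : 0 ≤ K) (hτδ : τ ≤ δ) (hτ0 : 0 ≤ τ)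
    (hv : v ≤ τ * K) (h : w ≤ M + γ * v) : w ≤ M + γ * (δ * K) := by
  nlinarith [mul_le_mul_of_nonneg_left hv hγ, mul_nonneg hγ hK]

lemma EP_expnorm (ω s : ℝ) : ‖Complex.exp (-(Complex.I) * (ω:ℂ) * (s:ℂ))‖ = 1 := by
  rw [Complex.norm_exp]
  have : (-(Complex.I) * (ω:ℂ) * (s:ℂ)).re = 0 := by simp
  rw [this, Real.exp_zero]

lemma EP_alg1 {E : Type*} [AddCommGroup E] [Module ℂ E] (a : ℂ) (u X Y : E) :
    (u - a • Y) - (u - a • X) = a • (X - Y) := by rw [smul_sub]; abel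

lemma EP_alg2 {E : Type*} [AddCommGroup E] [Module ℂ E] (a b : ℂ) (A B C : E) :
    -(a • A) - (-(a • B) - b • C) = -(a • (A - B)) + b • C := by
  rw [smul_sub]; abel

set_option maxHeartbeats 1000000 in
lemma EP_stepA (δ γ M c p B' L : ℝ) (hδ : 0 ≤ δ) (hγ : 0 < γ) (hM : 0 < M) (hc : 0 ≤ c)
    (hp : 1 ≤ p)
    (hB' : B' = 2*γ*δ*(M+γ*δ)) (hL : L = γ*(M + γ*δ*B') + c*B'^p)
    (a b : ℝ → ℝ)
    (hac : ContinuousOn a (Icc 0 δ)) (hbc : ContinuousOn b (Icc 0 δ))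
    (hb0 : ∀ t ∈ Icc (0:ℝ) δ, 0 ≤ b t)
    (hbz : b 0 = 0)
    (ha : ∀ t ∈ Icc (0:ℝ) δ, a t ≤ M + γ * ∫ τ in (0:ℝ)..t, b τ)
    (hb : ∀ t ∈ Icc (0:ℝ) δ, b t ≤ γ * (∫ τ in (0:ℝ)..t, a τ) + c * ∫ τ in (0:ℝ)..t, (b τ)^p)
    (hC1 : δ*(γ*(M+γ*δ) + c) ≤ 1/2) (hC2 : c*δ ≤ 1/2) :
    (∀ t ∈ Icc (0:ℝ) δ, b t ≤ B') ∧ ∀ t ∈ Icc (0:ℝ) δ, b t ≤ L * t := by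
  have haint : ∀ t ∈ Icc (0:ℝ) δ, IntervalIntegrable a volume 0 t := fun t ht =>
    (hac.mono (EP_subIcc ht)).intervalIntegrable
  have hbint : ∀ t ∈ Icc (0:ℝ) δ, IntervalIntegrable b volume 0 t := fun t ht =>
    (hbc.mono (EP_subIcc ht)).intervalIntegrable
  have hbpc : ContinuousOn (fun τ => (b τ)^p) (Icc 0 δ) :=
    hbc.rpow_const (fun x hx => Or.inr (by linarith))
  have hbpint : ∀ t ∈ Icc (0:ℝ) δ, IntervalIntegrable (fun τ => (b τ)^p) volume 0 t :=
    fun t ht => (hbpc.mono (EP_subIcc ht)).intervalIntegrable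
  have est : ∀ s ∈ Icc (0:ℝ) δ, (∀ τ ∈ Icc (0:ℝ) s, b τ ≤ 1) → b s ≤ 1/2 := by
    intro s hs hle
    have hsIcc : ∀ τ ∈ Icc (0:ℝ) s, τ ∈ Icc (0:ℝ) δ := fun τ hτ => ⟨hτ.1, hτ.2.trans hs.2⟩
    have h1 : ∫ τ in (0:ℝ)..s, a τ ≤ s * (M + γ*(δ*1)) := by
      refine EP_int_le_const hs.1 (haint s hs) (fun τ hτ => ?_)
      have hτδ := hsIcc τ hτ
      have hin : ∫ ρ in (0:ℝ)..τ, b ρ ≤ τ * 1 :=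
        EP_int_le_const hτ.1 (hbint τ hτδ) (fun ρ hρ => hle ρ ⟨hρ.1, hρ.2.trans hτ.2⟩)
      exact EP_abound hγ.le zero_le_one hτδ.2 hτ.1 hin (ha τ hτδ)
    have h2 : ∫ τ in (0:ℝ)..s, (b τ)^p ≤ s * 1 := by
      refine EP_int_le_const hs.1 (hbpint s hs) (fun τ hτ => ?_)
      exact Real.rpow_le_one (hb0 τ (hsIcc τ hτ)) (hle τ hτ) (by linarith)
    have h3 := hb s hs
    have hcoef : 0 ≤ γ*(M+γ*δ) + c := by positivity
    have t1 := mul_le_mul_of_nonneg_left h1 hγ.le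
    have t2 := mul_le_mul_of_nonneg_left h2 hc
    have t3 := mul_le_mul_of_nonneg_right hs.2 hcoef
    nlinarith
  have crude : ∀ t ∈ Icc (0:ℝ) δ, b t ≤ 1 := by
    by_contra hcon
    push_neg at hcon
    obtain ⟨t, ht, h1t⟩ := hcon
    set S : Set ℝ := Icc 0 δ ∩ b ⁻¹' (Ici 1) with hS
    have hSne : S.Nonempty := ⟨t, ht, h1t.le⟩
    have hSclosed : IsClosed S := hbc.preimage_isClosed_of_isClosed isClosed_Icc isClosed_Ici
    have hbdd : BddBelow S := ⟨0, fun x hx => hx.1.1⟩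
    have hts : sInf S ∈ S := hSclosed.csInf_mem hSne hbdd
    set t₁ := sInf S
    have ht₁Icc : t₁ ∈ Icc (0:ℝ) δ := hts.1
    have h1b : (1:ℝ) ≤ b t₁ := hts.2
    have htpos : 0 < t₁ := by
      rcases lt_or_eq_of_le ht₁Icc.1 with h | h
      · exact h
      · exfalso; rw [← h, hbz] at h1b; linarith
    have hnotS : ∀ τ ∈ Icc (0:ℝ) δ, τ < t₁ → b τ ≤ 1 := by
      intro τ hτ hτlt
      by_contra hgt
      exact absurd (csInf_le hbdd ⟨hτ, (lt_of_not_ge hgt).le⟩) (not_le.mpr hτlt)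
    have hhalf : ∀ s ∈ Icc (0:ℝ) δ, s < t₁ → b s ≤ 1/2 := by
      intro s hs hslt
      exact est s hs (fun τ hτ => hnotS τ ⟨hτ.1, hτ.2.trans hs.2⟩ (lt_of_le_of_lt hτ.2 hslt))
    have hsubset : Ico (0:ℝ) t₁ ⊆ Icc 0 δ := fun x hx => ⟨hx.1, hx.2.le.trans ht₁Icc.2⟩
    have hne : (nhdsWithin t₁ (Ico (0:ℝ) t₁)).NeBot := by
      rw [← mem_closure_iff_nhdsWithin_neBot, closure_Ico htpos.ne, right_mem_Icc]
      exact htpos.le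
    have htend : Filter.Tendsto b (nhdsWithin t₁ (Ico (0:ℝ) t₁)) (nhds (b t₁)) :=
      ((hbc t₁ ht₁Icc).mono hsubset).tendsto
    have hle : b t₁ ≤ 1/2 := by
      refine le_of_tendsto htend ?_
      filter_upwards [self_mem_nhdsWithin] with s hs
      exact hhalf s (hsubset hs) hs.2
    linarith
  obtain ⟨t₀, ht₀, hmax⟩ := isCompact_Icc.exists_isMaxOn ⟨0, le_refl 0, hδ⟩ hbc
  set B := b t₀ with hBdef
  have hmax' : ∀ τ ∈ Icc (0:ℝ) δ, b τ ≤ B := fun τ hτ => hmax hτ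
  have hB1 : B ≤ 1 := crude t₀ ht₀
  have hB0 : 0 ≤ B := hb0 t₀ ht₀
  have hBp : B^p ≤ B := by
    rcases eq_or_lt_of_le hB0 with h | h
    · rw [← h, Real.zero_rpow (by linarith)]
    · calc B^p ≤ B^(1:ℝ) := Real.rpow_le_rpow_of_exponent_ge h hB1 hp
        _ = B := Real.rpow_one B
  have hBp0 : 0 ≤ B^p := Real.rpow_nonneg hB0 p
  have hB'0 : 0 ≤ B' := by rw [hB']; positivity
  have ht₀2 : t₀ ≤ δ := ht₀.2
  have ht₀1 : 0 ≤ t₀ := ht₀.1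
  have hBB' : B ≤ B' := by
    have h1 : ∫ τ in (0:ℝ)..t₀, a τ ≤ t₀ * (M + γ*(δ*B)) := by
      refine EP_int_le_const ht₀.1 (haint t₀ ht₀) (fun τ hτ => ?_)
      have hτδ : τ ∈ Icc (0:ℝ) δ := ⟨hτ.1, hτ.2.trans ht₀.2⟩
      have hin : ∫ ρ in (0:ℝ)..τ, b ρ ≤ τ * B :=
        EP_int_le_const hτ.1 (hbint τ hτδ) (fun ρ hρ => hmax' ρ ⟨hρ.1, hρ.2.trans hτδ.2⟩)
      exact EP_abound hγ.le hB0 hτδ.2 hτ.1 hin (ha τ hτδ)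
    have h2 : ∫ τ in (0:ℝ)..t₀, (b τ)^p ≤ t₀ * B^p := by
      refine EP_int_le_const ht₀.1 (hbpint t₀ ht₀) (fun τ hτ => ?_)
      exact Real.rpow_le_rpow (hb0 τ ⟨hτ.1, hτ.2.trans ht₀.2⟩)
        (hmax' τ ⟨hτ.1, hτ.2.trans ht₀.2⟩) (by linarith)
    have h3 := hb t₀ ht₀
    have e1 := mul_le_mul_of_nonneg_left h1 hγ.le
    have e2 := mul_le_mul_of_nonneg_left h2 hc
    have k1 : t₀*(M + γ*(δ*B)) ≤ δ*(M + γ*δ) := by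
      nlinarith [mul_nonneg (sub_nonneg.mpr ht₀2) (by positivity : (0:ℝ) ≤ M + γ*(δ*B)),
        mul_nonneg (mul_nonneg hδ (mul_nonneg hγ.le hδ)) (sub_nonneg.mpr hB1)]
    have k2 : t₀*B^p ≤ δ*B := by
      nlinarith [mul_nonneg (sub_nonneg.mpr ht₀2) hBp0,
        mul_nonneg hδ (sub_nonneg.mpr hBp)]
    have k3 : c*(δ*B) ≤ (1/2)*B := by
      have := mul_le_mul_of_nonneg_right hC2 hB0
      nlinarith
    rw [hB']
    nlinarith [mul_le_mul_of_nonneg_left k1 hγ.le, mul_le_mul_of_nonneg_left k2 hc]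
  refine ⟨fun τ hτ => (hmax' τ hτ).trans hBB', ?_⟩
  intro t ht
  have hB'p0 : 0 ≤ B'^p := Real.rpow_nonneg hB'0 p
  have h1 : ∫ τ in (0:ℝ)..t, a τ ≤ t * (M + γ*(δ*B')) := by
    refine EP_int_le_const ht.1 (haint t ht) (fun τ hτ => ?_)
    have hτδ : τ ∈ Icc (0:ℝ) δ := ⟨hτ.1, hτ.2.trans ht.2⟩
    have hin : ∫ ρ in (0:ℝ)..τ, b ρ ≤ τ * B' :=
      EP_int_le_const hτ.1 (hbint τ hτδ) (fun ρ hρ =>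
        (hmax' ρ ⟨hρ.1, hρ.2.trans hτδ.2⟩).trans hBB')
    exact EP_abound hγ.le hB'0 hτδ.2 hτ.1 hin (ha τ hτδ)
  have h2 : ∫ τ in (0:ℝ)..t, (b τ)^p ≤ t * B'^p := by
    refine EP_int_le_const ht.1 (hbpint t ht) (fun τ hτ => ?_)
    exact Real.rpow_le_rpow (hb0 τ ⟨hτ.1, hτ.2.trans ht.2⟩)
      ((hmax' τ ⟨hτ.1, hτ.2.trans ht.2⟩).trans hBB') (by linarith)
  have h3 := hb t ht
  have e1 := mul_le_mul_of_nonneg_left h1 hγ.le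
  have e2 := mul_le_mul_of_nonneg_left h2 hc
  rw [hL]
  nlinarith

set_option maxHeartbeats 1000000 in
lemma EP_stepB (δ γ c L p : ℝ) (hδ : 0 ≤ δ) (hγ : 0 < γ) (hc : 0 ≤ c) (hL : 0 ≤ L)
    (hp : 1 < p) (hC3 : γ^2*δ^2 ≤ 1/4)
    (h z : ℝ → ℝ)
    (hhc : ContinuousOn h (Icc 0 δ)) (hzc : ContinuousOn z (Icc 0 δ))
    (hh0 : ∀ t ∈ Icc (0:ℝ) δ, 0 ≤ h t)
    (hh : ∀ t ∈ Icc (0:ℝ) δ, h t ≤ γ * ∫ τ in (0:ℝ)..t, z τ)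
    (hz : ∀ t ∈ Icc (0:ℝ) δ, z t ≤ γ * (∫ τ in (0:ℝ)..t, h τ) + c * ∫ τ in (0:ℝ)..t, (L*τ)^p) :
    ∀ t ∈ Icc (0:ℝ) δ, h t ≤ (8/7) * (γ*c*L^p*δ^(p+2)/((p+1)*(p+2))) := by
  have hp0 : (0:ℝ) < p := by linarith
  have hLp0 : 0 ≤ L^p := Real.rpow_nonneg hL p
  have hhint : ∀ t ∈ Icc (0:ℝ) δ, IntervalIntegrable h volume 0 t := fun t ht =>
    (hhc.mono (EP_subIcc ht)).intervalIntegrable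
  have hzint : ∀ t ∈ Icc (0:ℝ) δ, IntervalIntegrable z volume 0 t := fun t ht =>
    (hzc.mono (EP_subIcc ht)).intervalIntegrable
  have hintLp : ∀ s : ℝ, 0 ≤ s → ∫ τ in (0:ℝ)..s, (L*τ)^p = L^p * (s^(p+1)/(p+1)) := by
    intro s hs
    have h1 : ∫ τ in (0:ℝ)..s, (L*τ)^p = ∫ τ in (0:ℝ)..s, L^p * τ^p := by
      refine integral_congr (fun τ hτ => ?_)
      rw [uIcc_of_le hs] at hτ
      exact Real.mul_rpow hL hτ.1
    rw [h1, intervalIntegral.integral_const_mul, integral_rpow (Or.inl (by linarith))]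
    rw [Real.zero_rpow (by linarith : p + 1 ≠ 0)]
    ring
  obtain ⟨t₁, ht₁, hmax⟩ := isCompact_Icc.exists_isMaxOn ⟨0, le_refl 0, hδ⟩ hhc
  set H := h t₁ with hHdef
  have hmax' : ∀ τ ∈ Icc (0:ℝ) δ, h τ ≤ H := fun τ hτ => hmax hτ
  have hH0 : 0 ≤ H := hh0 t₁ ht₁
  have hzb : ∀ s ∈ Icc (0:ℝ) δ, z s ≤ γ*H*s + c*L^p*(s^(p+1)/(p+1)) := by
    intro s hs
    have h1 : ∫ τ in (0:ℝ)..s, h τ ≤ s * H :=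
      EP_int_le_const hs.1 (hhint s hs) (fun τ hτ => hmax' τ ⟨hτ.1, hτ.2.trans hs.2⟩)
    have h3 := hz s hs
    have e1 := mul_le_mul_of_nonneg_left h1 hγ.le
    rw [hintLp s hs.1] at h3
    nlinarith
  have hgc : ∀ s ∈ Icc (0:ℝ) δ,
      IntervalIntegrable (fun τ : ℝ => γ*H*τ + c*L^p*(τ^(p+1)/(p+1))) volume 0 s ∧
      IntervalIntegrable (fun τ : ℝ => γ*H*τ) volume 0 s ∧
      IntervalIntegrable (fun τ : ℝ => c*L^p*(τ^(p+1)/(p+1))) volume 0 s := by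
    intro s hs
    have hic : ContinuousOn (fun τ : ℝ => τ^(p+1)) (uIcc (0:ℝ) s) :=
      continuousOn_id.rpow_const (fun x hx => Or.inr (by linarith))
    have i1 : IntervalIntegrable (fun τ : ℝ => γ*H*τ) volume 0 s :=
      (continuous_const.mul continuous_id).intervalIntegrable 0 s
    have i2 : IntervalIntegrable (fun τ : ℝ => c*L^p*(τ^(p+1)/(p+1))) volume 0 s :=
      (continuousOn_const.mul (hic.div_const (p+1))).intervalIntegrable
    exact ⟨i1.add i2, i1, i2⟩
  have hint2 : ∀ s ∈ Icc (0:ℝ) δ,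
      ∫ τ in (0:ℝ)..s, (γ*H*τ + c*L^p*(τ^(p+1)/(p+1)))
        = γ*H*(s^2/2) + c*L^p*(s^(p+2)/((p+1)*(p+2))) := by
    intro s hs
    obtain ⟨_, i1, i2⟩ := hgc s hs
    rw [integral_add i1 i2]
    have e1 : ∫ τ in (0:ℝ)..s, γ*H*τ = γ*H*(s^2/2) := by
      rw [intervalIntegral.integral_const_mul, integral_id]; ring
    have e2 : ∫ τ in (0:ℝ)..s, c*L^p*(τ^(p+1)/(p+1)) = c*L^p*(s^(p+2)/((p+1)*(p+2))) := by
      have hfeq : (fun τ:ℝ => c*L^p*(τ^(p+1)/(p+1))) = fun τ:ℝ => (c*L^p/(p+1)) * τ^(p+1) := by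
        funext τ; ring
      rw [hfeq, intervalIntegral.integral_const_mul, integral_rpow (Or.inl (by linarith)),
        Real.zero_rpow (by linarith : p + 1 + 1 ≠ 0)]
      have e : p+1+1 = p+2 := by ring
      have hne1 : (p:ℝ)+1 ≠ 0 := by linarith
      have hne2 : (p:ℝ)+2 ≠ 0 := by linarith
      rw [e]
      field_simp
      try ring
    rw [e1, e2]
  have hhb : ∀ s ∈ Icc (0:ℝ) δ, h s ≤ γ*(γ*H*(s^2/2) + c*L^p*(s^(p+2)/((p+1)*(p+2)))) := by
    intro s hs
    refine (hh s hs).trans (mul_le_mul_of_nonneg_left ?_ hγ.le)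
    have hmono := integral_mono_on hs.1 (hzint s hs) (hgc s hs).1
      (fun τ hτ => hzb τ ⟨hτ.1, hτ.2.trans hs.2⟩)
    rw [hint2 s hs] at hmono
    exact hmono
  have hq1 : t₁^(p+2) ≤ δ^(p+2) := Real.rpow_le_rpow ht₁.1 ht₁.2 (by linarith)
  have hδp0 : 0 ≤ δ^(p+2) := Real.rpow_nonneg hδ _
  have hkey := hhb t₁ ht₁
  have hq3 : γ*(γ*H*(t₁^2/2)) ≤ (1/8)*H := by
    have ht₁sq : t₁^2 ≤ δ^2 := by nlinarith [ht₁.1, ht₁.2]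
    nlinarith [mul_le_mul_of_nonneg_right
      (le_trans (by nlinarith [sq_nonneg γ] : γ^2*t₁^2 ≤ γ^2*δ^2) hC3) hH0]
  have hq2 : γ*(c*L^p*(t₁^(p+2)/((p+1)*(p+2)))) ≤ γ*(c*L^p*(δ^(p+2)/((p+1)*(p+2)))) := by
    gcongr
  have hHb : H ≤ (8/7) * (γ*c*L^p*δ^(p+2)/((p+1)*(p+2))) := by
    have expand : γ*(γ*H*(t₁^2/2) + c*L^p*(t₁^(p+2)/((p+1)*(p+2))))
        = γ*(γ*H*(t₁^2/2)) + γ*(c*L^p*(t₁^(p+2)/((p+1)*(p+2)))) := by ring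
    rw [expand] at hkey
    have expand2 : γ*(c*L^p*(δ^(p+2)/((p+1)*(p+2))))
        = γ*c*L^p*δ^(p+2)/((p+1)*(p+2)) := by ring
    rw [expand2] at hq2
    linarith
  exact fun t ht => (hmax' t ht).trans hHb

set_option maxHeartbeats 1000000 in
lemma EP_final_arith (p cc γ W G Q Lp : ℝ) (hp : 1 < p) (hγ : 0 ≤ γ)
    (hcc : 0 ≤ cc) (hW : 0 ≤ W) (hG : 0 ≤ G) (hQ : 0 ≤ Q)
    (hLpb : Lp ≤ 9/8*(G*Q)) :
    (8/7)*(γ*cc*Lp*W/((p+1)*(p+2))) ≤ (8/9)/(p+2)*cc*(G*γ)*Q*W := by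
  have h1 : (0:ℝ) < p+1 := by linarith
  have h2 : (0:ℝ) < p+2 := by linarith
  have hD : (0:ℝ) ≤ (p+1)*(p+2) := by positivity
  have hY : (0:ℝ) ≤ cc*G*γ*Q*W := by positivity
  have e1 : (8/7)*(γ*cc*Lp*W/((p+1)*(p+2))) = (8/7*(γ*cc*Lp*W))/((p+1)*(p+2)) := by ring
  have e2 : (8/9)/(p+2)*cc*(G*γ)*Q*W = (8/9*(cc*G*γ*Q*W)*(p+1))/((p+1)*(p+2)) := by
    field_simp
  rw [e1, e2, div_le_div_iff₀ (by positivity) (by positivity)]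
  have key : γ*cc*W*Lp ≤ γ*cc*W*(9/8*(G*Q)) :=
    mul_le_mul_of_nonneg_left hLpb (by positivity)
  have hint1 := mul_le_mul_of_nonneg_right key hD
  have hint2 : (0:ℝ) ≤ (p-1)*((cc*G*γ*Q*W)*((p+1)*(p+2))) :=
    mul_nonneg (by linarith) (mul_nonneg hY hD)
  have hint3 : (0:ℝ) ≤ (cc*G*γ*Q*W)*((p+1)*(p+2)) := mul_nonneg hY hD
  nlinarith [hint1, hint2, hint3]

set_option maxHeartbeats 4000000 in
/-- Short-time theorem for the exciton-polariton system, regime B with `α = 0`, `C₁ = 0`: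
with data `φ(0) = φ̃(0) = φ₀` (`‖φ₀‖ = M`), `ψ(0) = ψ̃(0) = 0`, where `(φ̃, ψ̃)` solves the
linear exciton system B, the relative error satisfies
`‖φ̃(t) − φ(t)‖/‖φ(t)‖ ≤ (1/(p+2))|g|K_p γ^{p+1} M^{p−1} C₂^{p+2} ε + o(ε)` for
`0 ≤ t ≤ C₂ ε^{1/(p+2)}`, as `ε → 0`.  Abstract setting: `E = H^s(ℝⁿ)`, `s > n/2`;
`U t = e^{itΔ}` isometric; `N u = |u|^{p−1}u` with `‖N u‖ ≤ K_p‖u‖^p`; both systems are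
given in Duhamel form, with solutions depending on `ε`. -/
theorem stmt16 {E : Type*} [NormedAddCommGroup E] [NormedSpace ℂ E] [CompleteSpace E]
    (p γ g ω₀ Kp M C₂ T : ℝ) (hp : 1 < p) (hγ : 0 < γ) (hKp : 0 ≤ Kp)
    (hM : 0 < M) (hC₂ : 0 ≤ C₂) (hT : 0 < T)
    (U : ℝ → E →ₗᵢ[ℂ] E) (N : E → E) (hN : ∀ u : E, ‖N u‖ ≤ Kp * ‖u‖ ^ p)
    (φ₀ : E) (hφ₀ : ‖φ₀‖ = M)
    (φ ψ φt ψt : ℝ → ℝ → E)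
    (hφc : ∀ ε ∈ Ioo (0:ℝ) 1, ContinuousOn (φ ε) (Icc 0 T))
    (hψc : ∀ ε ∈ Ioo (0:ℝ) 1, ContinuousOn (ψ ε) (Icc 0 T))
    (hφtc : ∀ ε ∈ Ioo (0:ℝ) 1, ContinuousOn (φt ε) (Icc 0 T))
    (hψtc : ∀ ε ∈ Ioo (0:ℝ) 1, ContinuousOn (ψt ε) (Icc 0 T))
    (hIntU : ∀ ε ∈ Ioo (0:ℝ) 1, ∀ t ∈ Icc (0:ℝ) T,
      IntervalIntegrable (fun τ => U (t - τ) (ψ ε τ)) volume 0 t ∧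
      IntervalIntegrable (fun τ => U (t - τ) (ψt ε τ)) volume 0 t)
    -- the nonlinear exciton-polariton system, in Duhamel form
    (hDuhφ : ∀ ε ∈ Ioo (0:ℝ) 1, ∀ t ∈ Icc (0:ℝ) T,
      φ ε t = U t φ₀
        - (Complex.I * (γ : ℂ)) • ∫ τ in (0:ℝ)..t, U (t - τ) (ψ ε τ))
    (hDuhψ : ∀ ε ∈ Ioo (0:ℝ) 1, ∀ t ∈ Icc (0:ℝ) T,
      ψ ε t = -(Complex.I * (γ : ℂ)) • ∫ τ in (0:ℝ)..t,
              Complex.exp (-(Complex.I) * (ω₀ : ℂ) * ((t - τ : ℝ) : ℂ)) • φ ε τ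
            - (Complex.I * (g : ℂ)) • ∫ τ in (0:ℝ)..t,
              Complex.exp (-(Complex.I) * (ω₀ : ℂ) * ((t - τ : ℝ) : ℂ)) • N (ψ ε τ))
    -- the linear exciton system B, in Duhamel form
    (hDuhφt : ∀ ε ∈ Ioo (0:ℝ) 1, ∀ t ∈ Icc (0:ℝ) T,
      φt ε t = U t φ₀
        - (Complex.I * (γ : ℂ)) • ∫ τ in (0:ℝ)..t, U (t - τ) (ψt ε τ))
    (hDuhψt : ∀ ε ∈ Ioo (0:ℝ) 1, ∀ t ∈ Icc (0:ℝ) T,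
      ψt ε t = -(Complex.I * (γ : ℂ)) • ∫ τ in (0:ℝ)..t,
              Complex.exp (-(Complex.I) * (ω₀ : ℂ) * ((t - τ : ℝ) : ℂ)) • φt ε τ) :
    ∃ err : ℝ → ℝ, Tendsto (fun ε => err ε / ε) (nhdsWithin 0 (Ioi 0)) (nhds 0) ∧
      ∃ ε₀ > (0:ℝ), ∀ ε : ℝ, 0 < ε → ε < ε₀ → ε < 1 →
        C₂ * ε ^ (1 / (p + 2)) ≤ T →
        ∀ t ∈ Icc (0:ℝ) (C₂ * ε ^ (1 / (p + 2))),
          ‖φt ε t - φ ε t‖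
            ≤ (1 / (p + 2) * |g| * Kp * γ ^ (p + 1) * M ^ (p - 1) * C₂ ^ (p + 2) * ε
                + err ε) * ‖φ ε t‖ := by
  have hp2 : (0:ℝ) < p + 2 := by linarith
  have hp0 : (0:ℝ) < p := by linarith
  have hr : (0:ℝ) < 1/(p+2) := by positivity
  refine ⟨fun _ => 0, by simpa using tendsto_const_nhds, ?_⟩
  set c : ℝ := |g| * Kp with hcdef
  have hc : 0 ≤ c := mul_nonneg (abs_nonneg g) hKp
  set d : ℝ → ℝ := fun ε => C₂ * ε ^ (1/(p+2)) with hddef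
  set Bf : ℝ → ℝ := fun x => 2*γ*x*(M+γ*x) with hBfdef
  set Lf : ℝ → ℝ := fun x => γ*(M + γ*x*(Bf x)) + ((γ*c)*x)*(Bf x)^p with hLfdef
  have hdt : Tendsto d (nhdsWithin 0 (Ioi 0)) (nhds 0) := by
    have h1 : ContinuousAt (fun x : ℝ => x ^ (1/(p+2))) 0 :=
      Real.continuousAt_rpow_const 0 _ (Or.inr hr.le)
    have h2 : Tendsto (fun ε : ℝ => ε ^ (1/(p+2))) (nhdsWithin 0 (Ioi 0)) (nhds 0) := by
      have h3 := h1.tendsto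
      rw [Real.zero_rpow hr.ne'] at h3
      exact h3.mono_left nhdsWithin_le_nhds
    have h4 := h2.const_mul C₂
    rw [hddef]
    simpa using h4
  have hBfc : Continuous Bf := by rw [hBfdef]; continuity
  have hBf0 : Bf 0 = 0 := by rw [hBfdef]; ring
  have hLf0 : Lf 0 = γ*M := by
    rw [hLfdef]
    simp only [hBf0]
    rw [Real.zero_rpow hp0.ne']
    ring
  have hLfca : ContinuousAt Lf 0 := by
    have hA : ContinuousAt (fun x => (Bf x)^p) 0 :=
      (Real.continuousAt_rpow_const (Bf 0) p (Or.inr hp0.le)).comp hBfc.continuousAt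
    rw [hLfdef]
    exact (continuousAt_const.mul (continuousAt_const.add
      ((continuousAt_const.mul continuousAt_id).mul hBfc.continuousAt))).add
      (((continuousAt_const.mul continuousAt_id)).mul hA)
  have hcomp : ∀ G : ℝ → ℝ, ContinuousAt G 0 →
      Tendsto (fun ε => G (d ε)) (nhdsWithin 0 (Ioi 0)) (nhds (G 0)) :=
    fun G hG => hG.tendsto.comp hdt
  have hLft : Tendsto (fun ε => Lf (d ε)) (nhdsWithin 0 (Ioi 0)) (nhds (γ*M)) := by
    have h5 := hcomp Lf hLfca
    rwa [hLf0] at h5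
  have t1 : Tendsto (fun ε => d ε * (γ*(M+γ*(d ε)) + (γ*c)*(d ε)))
      (nhdsWithin 0 (Ioi 0)) (nhds 0) := by
    have := hcomp (fun x => x * (γ*(M+γ*x) + (γ*c)*x))
      (((continuous_id.mul (by continuity)) :
        Continuous fun x : ℝ => x * (γ*(M+γ*x) + (γ*c)*x)).continuousAt)
    simpa using this
  have ev1 : ∀ᶠ ε in nhdsWithin 0 (Ioi 0),
      d ε * (γ*(M+γ*(d ε)) + (γ*c)*(d ε)) < 1/2 :=
    t1.eventually_lt_const (by norm_num)
  have t2 : Tendsto (fun ε => ((γ*c)*(d ε))*(d ε)) (nhdsWithin 0 (Ioi 0)) (nhds 0) := by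
    have := hcomp (fun x => ((γ*c)*x)*x)
      (((continuous_const.mul continuous_id).mul continuous_id).continuousAt)
    simpa using this
  have ev2 : ∀ᶠ ε in nhdsWithin 0 (Ioi 0), ((γ*c)*(d ε))*(d ε) < 1/2 :=
    t2.eventually_lt_const (by norm_num)
  have t3 : Tendsto (fun ε => γ^2 * (d ε)^2) (nhdsWithin 0 (Ioi 0)) (nhds 0) := by
    have := hcomp (fun x => γ^2 * x^2)
      ((continuous_const.mul (continuous_pow 2)).continuousAt)
    simpa using this
  have ev3 : ∀ᶠ ε in nhdsWithin 0 (Ioi 0), γ^2 * (d ε)^2 < 1/4 :=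
    t3.eventually_lt_const (by norm_num)
  have t4 : Tendsto (fun ε => (Lf (d ε))^p) (nhdsWithin 0 (Ioi 0)) (nhds ((γ*M)^p)) :=
    (Real.continuousAt_rpow_const (γ*M) p (Or.inl (by positivity))).tendsto.comp hLft
  have ev4 : ∀ᶠ ε in nhdsWithin 0 (Ioi 0), (Lf (d ε))^p < 9/8*((γ*M)^p) :=
    t4.eventually_lt_const
      (by nlinarith [Real.rpow_pos_of_pos (show (0:ℝ) < γ*M by positivity) p])
  have t5 : Tendsto (fun ε => γ * (Lf (d ε)) * (d ε)^2) (nhdsWithin 0 (Ioi 0)) (nhds 0) := by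
    have := hcomp (fun x => γ * (Lf x) * x^2)
      (((continuousAt_const.mul hLfca).mul ((continuous_pow 2).continuousAt)))
    simpa using this
  have ev5 : ∀ᶠ ε in nhdsWithin 0 (Ioi 0), γ * (Lf (d ε)) * (d ε)^2 < M/9 :=
    t5.eventually_lt_const (by positivity)
  have hall := (((ev1.and ev2).and ev3).and ev4).and ev5
  rw [(nhdsGT_basis (0:ℝ)).eventually_iff] at hall
  obtain ⟨ε₀, hε₀pos, hcond⟩ := hall
  refine ⟨ε₀, hε₀pos, ?_⟩
  intro ε hε0 hεε₀ hε1 hδT t ht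
  obtain ⟨⟨⟨⟨c1, c2⟩, c3⟩, c4⟩, c5⟩ := hcond ⟨hε0, hεε₀⟩
  have hεmem : ε ∈ Ioo (0:ℝ) 1 := ⟨hε0, hε1⟩
  set δ := C₂ * ε ^ (1/(p+2)) with hδdef
  rw [show d ε = δ from rfl] at c1 c2 c3 c4 c5
  have hδ0 : 0 ≤ δ := by rw [hδdef]; exact mul_nonneg hC₂ (Real.rpow_nonneg hε0.le _)
  have hIccsub : Icc (0:ℝ) δ ⊆ Icc 0 T := Icc_subset_Icc le_rfl hδT
  set B' := Bf δ with hB'def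
  set L' := Lf δ with hL'def
  have hB'eq : B' = 2*γ*δ*(M+γ*δ) := rfl
  have hL'eq : L' = γ*(M + γ*δ*B') + ((γ*c)*δ)*B'^p := rfl
  clear_value B' L'
  have hcB : 0 ≤ (γ*c)*δ := mul_nonneg (mul_nonneg hγ.le hc) hδ0
  have hMγδ : (0:ℝ) ≤ M + γ*δ := by nlinarith [mul_nonneg hγ.le hδ0]
  have hB'0 : 0 ≤ B' := by
    rw [hB'eq]; nlinarith [mul_nonneg (mul_nonneg hγ.le hδ0) hMγδ]
  have hL'0 : 0 ≤ L' := by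
    rw [hL'eq]
    have h1 : 0 ≤ γ*δ*B' := mul_nonneg (mul_nonneg hγ.le hδ0) hB'0
    have h2 : 0 ≤ ((γ*c)*δ)*B'^p := mul_nonneg hcB (Real.rpow_nonneg hB'0 p)
    nlinarith [mul_nonneg hγ.le (by linarith : (0:ℝ) ≤ M + γ*δ*B')]
  have hIγn : ‖Complex.I * (γ:ℂ)‖ = γ := by
    simp [map_mul, abs_of_pos hγ]
  have hIgn : ‖Complex.I * (g:ℂ)‖ = |g| := by
    simp [map_mul]
  have hsubT : ∀ {s : ℝ}, s ∈ Icc (0:ℝ) δ → uIcc (0:ℝ) s ⊆ Icc 0 T :=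
    fun hs => (EP_subIcc hs).trans hIccsub
  have hexpc : ∀ s : ℝ,
      Continuous (fun τ : ℝ => Complex.exp (-(Complex.I) * (ω₀:ℂ) * ((s - τ : ℝ):ℂ))) :=
    fun s => Complex.continuous_exp.comp (by continuity)
  -- bound on the inner nonlinear integral
  have hDbound : ∀ s ∈ Icc (0:ℝ) δ,
      ‖∫ τ in (0:ℝ)..s, Complex.exp (-(Complex.I) * (ω₀:ℂ) * ((s - τ : ℝ):ℂ)) • N (ψ ε τ)‖
        ≤ Kp * ∫ τ in (0:ℝ)..s, ‖ψ ε τ‖^p := by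
    intro s hs
    have hgi : IntervalIntegrable (fun τ => Kp * ‖ψ ε τ‖^p) volume 0 s :=
      (continuousOn_const.mul ((((hψc ε hεmem).mono (hsubT hs)).norm).rpow_const
        (fun x _ => Or.inr hp0.le))).intervalIntegrable
    have hbd : ∀ᵐ τ ∂(volume.restrict (Set.uIoc (0:ℝ) s)),
        ‖Complex.exp (-(Complex.I) * (ω₀:ℂ) * ((s - τ : ℝ):ℂ)) • N (ψ ε τ)‖
          ≤ Kp * ‖ψ ε τ‖^p :=
      Filter.Eventually.of_forall fun τ => by
        rw [norm_smul, EP_expnorm, one_mul]; exact hN _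
    have h0 := (intervalIntegral.norm_integral_le_of_norm_le
      (f := fun τ => Complex.exp (-(Complex.I) * (ω₀:ℂ) * ((s - τ : ℝ):ℂ)) • N (ψ ε τ)) hs.1
      (Filter.Eventually.of_forall fun τ _ => by
        rw [norm_smul, EP_expnorm, one_mul]; exact hN _) hgi).trans (le_abs_self _)
    rw [abs_of_nonneg (intervalIntegral.integral_nonneg hs.1 (fun τ _ =>
      mul_nonneg hKp (Real.rpow_nonneg (norm_nonneg _) p)))] at h0
    rwa [intervalIntegral.integral_const_mul] at h0
  have hψpnn : ∀ s ∈ Icc (0:ℝ) δ, 0 ≤ ∫ τ in (0:ℝ)..s, ‖ψ ε τ‖^p :=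
    fun s hs => intervalIntegral.integral_nonneg hs.1 (fun τ _ => Real.rpow_nonneg (norm_nonneg _) p)
  -- scalar inequality for a = ‖φ‖
  have ha : ∀ s ∈ Icc (0:ℝ) δ, ‖φ ε s‖ ≤ M + γ * ∫ τ in (0:ℝ)..s, ‖ψ ε τ‖ := by
    intro s hs
    have hsT := hIccsub hs
    have hIa : ‖∫ τ in (0:ℝ)..s, U (s - τ) (ψ ε τ)‖ ≤ ∫ τ in (0:ℝ)..s, ‖ψ ε τ‖ :=
      (intervalIntegral.norm_integral_le_integral_norm hs.1).trans_eq
        (intervalIntegral.integral_congr fun τ _ => (U (s - τ)).norm_map (ψ ε τ))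
    rw [hDuhφ ε hεmem s hsT]
    have hn := norm_sub_le (U s φ₀)
      ((Complex.I * (γ:ℂ)) • ∫ τ in (0:ℝ)..s, U (s - τ) (ψ ε τ))
    rw [norm_smul, hIγn, (U s).norm_map, hφ₀] at hn
    have := mul_le_mul_of_nonneg_left hIa hγ.le
    linarith
  have halow : ∀ s ∈ Icc (0:ℝ) δ, M - γ * ∫ τ in (0:ℝ)..s, ‖ψ ε τ‖ ≤ ‖φ ε s‖ := by
    intro s hs
    have hsT := hIccsub hs
    have hIa : ‖∫ τ in (0:ℝ)..s, U (s - τ) (ψ ε τ)‖ ≤ ∫ τ in (0:ℝ)..s, ‖ψ ε τ‖ :=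
      (intervalIntegral.norm_integral_le_integral_norm hs.1).trans_eq
        (intervalIntegral.integral_congr fun τ _ => (U (s - τ)).norm_map (ψ ε τ))
    rw [hDuhφ ε hεmem s hsT]
    have hn := norm_sub_norm_le (U s φ₀)
      ((Complex.I * (γ:ℂ)) • ∫ τ in (0:ℝ)..s, U (s - τ) (ψ ε τ))
    rw [norm_smul, hIγn, (U s).norm_map, hφ₀] at hn
    have := mul_le_mul_of_nonneg_left hIa hγ.le
    linarith
  -- scalar inequality for b = ‖ψ‖
  have hbineq : ∀ s ∈ Icc (0:ℝ) δ, ‖ψ ε s‖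
      ≤ γ * (∫ τ in (0:ℝ)..s, ‖φ ε τ‖) + ((γ*c)*δ) * ∫ τ in (0:ℝ)..s, ‖ψ ε τ‖^p := by
    intro s hs
    have hsT := hIccsub hs
    rw [hDuhψ ε hεmem s hsT, norm_smul, norm_neg, hIγn]
    have hFi : IntervalIntegrable
        (fun τ => Complex.exp (-(Complex.I) * (ω₀:ℂ) * ((s - τ : ℝ):ℂ)) • φ ε τ) volume 0 s :=
      (((hexpc s).continuousOn).smul ((hφc ε hεmem).mono (hsubT hs))).intervalIntegrable
    have hXeq : (∫ τ in (0:ℝ)..s,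
          (Complex.exp (-(Complex.I) * (ω₀:ℂ) * ((s - τ : ℝ):ℂ)) • φ ε τ
            - (Complex.I * (g:ℂ)) • ∫ σ in (0:ℝ)..s,
                Complex.exp (-(Complex.I) * (ω₀:ℂ) * ((s - σ : ℝ):ℂ)) • N (ψ ε σ)))
        = (∫ τ in (0:ℝ)..s, Complex.exp (-(Complex.I) * (ω₀:ℂ) * ((s - τ : ℝ):ℂ)) • φ ε τ)
          - s • ((Complex.I * (g:ℂ)) • ∫ σ in (0:ℝ)..s,
                Complex.exp (-(Complex.I) * (ω₀:ℂ) * ((s - σ : ℝ):ℂ)) • N (ψ ε σ)) := by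
      rw [intervalIntegral.integral_sub hFi intervalIntegrable_const, intervalIntegral.integral_const]
      norm_num
    rw [hXeq]
    have h1 : ‖∫ τ in (0:ℝ)..s, Complex.exp (-(Complex.I) * (ω₀:ℂ) * ((s - τ : ℝ):ℂ)) • φ ε τ‖
        ≤ ∫ τ in (0:ℝ)..s, ‖φ ε τ‖ :=
      (intervalIntegral.norm_integral_le_integral_norm hs.1).trans_eq
        (intervalIntegral.integral_congr fun τ _ => by rw [norm_smul, EP_expnorm, one_mul])
    have h2 : ‖s • ((Complex.I * (g:ℂ)) • ∫ σ in (0:ℝ)..s,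
          Complex.exp (-(Complex.I) * (ω₀:ℂ) * ((s - σ : ℝ):ℂ)) • N (ψ ε σ))‖
        ≤ s * (|g| * (Kp * ∫ τ in (0:ℝ)..s, ‖ψ ε τ‖^p)) := by
      rw [norm_smul, norm_smul, hIgn, Real.norm_eq_abs, abs_of_nonneg hs.1]
      exact mul_le_mul_of_nonneg_left
        (mul_le_mul_of_nonneg_left (hDbound s hs) (abs_nonneg g)) hs.1
    have hn := norm_sub_le
      (∫ τ in (0:ℝ)..s, Complex.exp (-(Complex.I) * (ω₀:ℂ) * ((s - τ : ℝ):ℂ)) • φ ε τ)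
      (s • ((Complex.I * (g:ℂ)) • ∫ σ in (0:ℝ)..s,
          Complex.exp (-(Complex.I) * (ω₀:ℂ) * ((s - σ : ℝ):ℂ)) • N (ψ ε σ)))
    have hstep : γ * (s * (|g| * (Kp * ∫ τ in (0:ℝ)..s, ‖ψ ε τ‖^p)))
        ≤ ((γ*c)*δ) * ∫ τ in (0:ℝ)..s, ‖ψ ε τ‖^p := by
      rw [hcdef]
      nlinarith [mul_le_mul_of_nonneg_right hs.2
        (mul_nonneg (mul_nonneg hγ.le (mul_nonneg (abs_nonneg g) hKp)) (hψpnn s hs)),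
        hψpnn s hs]
    nlinarith [mul_le_mul_of_nonneg_left (hn.trans (add_le_add h1 h2)) hγ.le]
  -- b 0 = 0
  have hψ00 : ψ ε 0 = 0 := by
    have h00 := hDuhψ ε hεmem 0 ⟨le_rfl, hT.le⟩
    simpa using h00
  -- apply step A
  obtain ⟨hbB', hbL⟩ := EP_stepA δ γ M ((γ*c)*δ) p B' L' hδ0 hγ hM hcB hp.le hB'eq hL'eq
    (fun s => ‖φ ε s‖) (fun s => ‖ψ ε s‖)
    (((hφc ε hεmem).norm).mono hIccsub) (((hψc ε hεmem).norm).mono hIccsub)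
    (fun s _ => norm_nonneg _) (by simp [hψ00]) ha hbineq c1.le c2.le
  -- comparison of the nonlinear integral
  have hψppt : ∀ s ∈ Icc (0:ℝ) δ,
      ∫ τ in (0:ℝ)..s, ‖ψ ε τ‖^p ≤ ∫ τ in (0:ℝ)..s, (L'*τ)^p := by
    intro s hs
    refine intervalIntegral.integral_mono_on hs.1
      ((((hψc ε hεmem).mono (hsubT hs)).norm.rpow_const
        (fun x _ => Or.inr hp0.le)).intervalIntegrable)
      (((continuousOn_const.mul continuousOn_id).rpow_const
        (fun x _ => Or.inr hp0.le)).intervalIntegrable)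
      (fun τ hτ => Real.rpow_le_rpow (norm_nonneg _)
        (hbL τ ⟨hτ.1, hτ.2.trans hs.2⟩) hp0.le)
  -- scalar inequality for h
  have hηineq : ∀ s ∈ Icc (0:ℝ) δ, ‖φt ε s - φ ε s‖
      ≤ γ * ∫ τ in (0:ℝ)..s, ‖ψt ε τ - ψ ε τ‖ := by
    intro s hs
    have hsT := hIccsub hs
    obtain ⟨hiψ, hiψt⟩ := hIntU ε hεmem s hsT
    have heq : φt ε s - φ ε s = (Complex.I * (γ:ℂ)) •
        ((∫ τ in (0:ℝ)..s, U (s - τ) (ψ ε τ)) - ∫ τ in (0:ℝ)..s, U (s - τ) (ψt ε τ)) := by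
      rw [hDuhφt ε hεmem s hsT, hDuhφ ε hεmem s hsT]
      exact EP_alg1 _ _ _ _
    rw [heq, norm_smul, hIγn]
    refine mul_le_mul_of_nonneg_left ?_ hγ.le
    have hsubeq : (∫ τ in (0:ℝ)..s, U (s - τ) (ψ ε τ)) - ∫ τ in (0:ℝ)..s, U (s - τ) (ψt ε τ)
        = ∫ τ in (0:ℝ)..s, U (s - τ) (ψ ε τ - ψt ε τ) := by
      rw [← intervalIntegral.integral_sub hiψ hiψt]
      exact intervalIntegral.integral_congr fun τ _ => ((U (s - τ)).map_sub _ _).symm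
    rw [hsubeq]
    refine (intervalIntegral.norm_integral_le_integral_norm hs.1).trans_eq (intervalIntegral.integral_congr fun τ _ => ?_)
    rw [(U (s - τ)).norm_map, norm_sub_rev]
  -- scalar inequality for z
  have habel : ∀ X Y Z W : E, X - Y = W → X - (Y - Z) = W + Z := by
    intro X Y Z W h
    rw [← h]; abel
  have hζineq : ∀ s ∈ Icc (0:ℝ) δ, ‖ψt ε s - ψ ε s‖
      ≤ γ * (∫ τ in (0:ℝ)..s, ‖φt ε τ - φ ε τ‖) + ((γ*c)*δ) * ∫ τ in (0:ℝ)..s, (L'*τ)^p := by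
    intro s hs
    have hsT := hIccsub hs
    have hFi : IntervalIntegrable
        (fun τ => Complex.exp (-(Complex.I) * (ω₀:ℂ) * ((s - τ : ℝ):ℂ)) • φ ε τ) volume 0 s :=
      (((hexpc s).continuousOn).smul ((hφc ε hεmem).mono (hsubT hs))).intervalIntegrable
    have hFti : IntervalIntegrable
        (fun τ => Complex.exp (-(Complex.I) * (ω₀:ℂ) * ((s - τ : ℝ):ℂ)) • φt ε τ) volume 0 s :=
      (((hexpc s).continuousOn).smul ((hφtc ε hεmem).mono (hsubT hs))).intervalIntegrable
    rw [hDuhψt ε hεmem s hsT, hDuhψ ε hεmem s hsT, ← smul_sub, norm_smul, norm_neg, hIγn]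
    have hXeq : (∫ τ in (0:ℝ)..s,
          (Complex.exp (-(Complex.I) * (ω₀:ℂ) * ((s - τ : ℝ):ℂ)) • φ ε τ
            - (Complex.I * (g:ℂ)) • ∫ σ in (0:ℝ)..s,
                Complex.exp (-(Complex.I) * (ω₀:ℂ) * ((s - σ : ℝ):ℂ)) • N (ψ ε σ)))
        = (∫ τ in (0:ℝ)..s, Complex.exp (-(Complex.I) * (ω₀:ℂ) * ((s - τ : ℝ):ℂ)) • φ ε τ)
          - s • ((Complex.I * (g:ℂ)) • ∫ σ in (0:ℝ)..s,
                Complex.exp (-(Complex.I) * (ω₀:ℂ) * ((s - σ : ℝ):ℂ)) • N (ψ ε σ)) := by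
      rw [intervalIntegral.integral_sub hFi intervalIntegrable_const, intervalIntegral.integral_const]
      norm_num
    rw [hXeq]
    have hAF : (∫ τ in (0:ℝ)..s, Complex.exp (-(Complex.I) * (ω₀:ℂ) * ((s - τ : ℝ):ℂ)) • φt ε τ)
        - (∫ τ in (0:ℝ)..s, Complex.exp (-(Complex.I) * (ω₀:ℂ) * ((s - τ : ℝ):ℂ)) • φ ε τ)
        = ∫ τ in (0:ℝ)..s,
            Complex.exp (-(Complex.I) * (ω₀:ℂ) * ((s - τ : ℝ):ℂ)) • (φt ε τ - φ ε τ) := by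
      rw [← intervalIntegral.integral_sub hFti hFi]
      exact intervalIntegral.integral_congr fun τ _ => (smul_sub _ _ _).symm
    rw [habel _ _ _ _ hAF]
    have h1 : ‖∫ τ in (0:ℝ)..s,
          Complex.exp (-(Complex.I) * (ω₀:ℂ) * ((s - τ : ℝ):ℂ)) • (φt ε τ - φ ε τ)‖
        ≤ ∫ τ in (0:ℝ)..s, ‖φt ε τ - φ ε τ‖ :=
      (intervalIntegral.norm_integral_le_integral_norm hs.1).trans_eq
        (intervalIntegral.integral_congr fun τ _ => by rw [norm_smul, EP_expnorm, one_mul])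
    have h2 : ‖s • ((Complex.I * (g:ℂ)) • ∫ σ in (0:ℝ)..s,
          Complex.exp (-(Complex.I) * (ω₀:ℂ) * ((s - σ : ℝ):ℂ)) • N (ψ ε σ))‖
        ≤ s * (|g| * (Kp * ∫ τ in (0:ℝ)..s, ‖ψ ε τ‖^p)) := by
      rw [norm_smul, norm_smul, hIgn, Real.norm_eq_abs, abs_of_nonneg hs.1]
      exact mul_le_mul_of_nonneg_left
        (mul_le_mul_of_nonneg_left (hDbound s hs) (abs_nonneg g)) hs.1
    have hn := norm_add_le
      (∫ τ in (0:ℝ)..s,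
          Complex.exp (-(Complex.I) * (ω₀:ℂ) * ((s - τ : ℝ):ℂ)) • (φt ε τ - φ ε τ))
      (s • ((Complex.I * (g:ℂ)) • ∫ σ in (0:ℝ)..s,
          Complex.exp (-(Complex.I) * (ω₀:ℂ) * ((s - σ : ℝ):ℂ)) • N (ψ ε σ)))
    have hLppos : 0 ≤ ∫ τ in (0:ℝ)..s, (L'*τ)^p :=
      le_trans (hψpnn s hs) (hψppt s hs)
    have hstep : γ * (s * (|g| * (Kp * ∫ τ in (0:ℝ)..s, ‖ψ ε τ‖^p)))
        ≤ ((γ*c)*δ) * ∫ τ in (0:ℝ)..s, (L'*τ)^p := by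
      have hmono := hψppt s hs
      rw [hcdef]
      nlinarith [mul_le_mul_of_nonneg_right hs.2
        (mul_nonneg (mul_nonneg hγ.le (mul_nonneg (abs_nonneg g) hKp)) (hψpnn s hs)),
        hψpnn s hs,
        mul_le_mul_of_nonneg_left hmono
          (mul_nonneg (mul_nonneg (mul_nonneg hγ.le (abs_nonneg g)) hKp) hδ0)]
    nlinarith [mul_le_mul_of_nonneg_left (hn.trans (add_le_add h1 h2)) hγ.le]
  -- apply step B
  have hkey := EP_stepB δ γ ((γ*c)*δ) L' p hδ0 hγ hcB hL'0 hp c3.le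
    (fun s => ‖φt ε s - φ ε s‖) (fun s => ‖ψt ε s - ψ ε s‖)
    ((((hφtc ε hεmem).sub (hφc ε hεmem)).norm).mono hIccsub)
    ((((hψtc ε hεmem).sub (hψc ε hεmem)).norm).mono hIccsub)
    (fun s _ => norm_nonneg _) hηineq hζineq
  -- lower bound for ‖φ‖
  have halow2 : (8/9)*M ≤ ‖φ ε t‖ := by
    have h1 := halow t ht
    have h2 : ∫ τ in (0:ℝ)..t, ‖ψ ε τ‖ ≤ t * (L'*δ) :=
      EP_int_le_const ht.1
        ((((hψc ε hεmem).mono (hsubT ht)).norm).intervalIntegrable)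
        (fun τ hτ => (hbL τ ⟨hτ.1, hτ.2.trans ht.2⟩).trans
          (mul_le_mul_of_nonneg_left (hτ.2.trans ht.2) hL'0))
    have h3 := mul_le_mul_of_nonneg_left h2 hγ.le
    have h4 : γ * (t * (L'*δ)) ≤ γ * L' * δ^2 := by
      nlinarith [mul_nonneg hγ.le (mul_nonneg hL'0 hδ0), ht.1, ht.2]
    nlinarith
  -- final assembly
  have hδe : δ^(p+2) = C₂^(p+2) * ε := by
    rw [hδdef, Real.mul_rpow hC₂ (Real.rpow_nonneg hε0.le _), ← Real.rpow_mul hε0.le,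
      one_div_mul_cancel hp2.ne', Real.rpow_one]
  have hgm : (γ*M)^p = γ^p * M^p := Real.mul_rpow hγ.le hM.le
  have hLpb : L'^p ≤ 9/8*(γ^p * M^p) := by rw [← hgm]; exact c4.le
  have hgp1 : γ^(p+1) = γ^p * γ := Real.rpow_add_one hγ.ne' p
  have hMp' : M^(p-1) = M^p / M := by
    rw [eq_div_iff hM.ne']
    have e : M^(p-1) * M = M^((p-1)+1) := (Real.rpow_add_one hM.ne' (p-1)).symm
    rw [e]
    congr 1
    ring
  have hcoef0 : 0 ≤ 1/(p+2) * |g| * Kp * γ^(p+1) * M^(p-1) * C₂^(p+2) * ε := by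
    have h1 : (0:ℝ) ≤ 1/(p+2) := by positivity
    exact mul_nonneg (mul_nonneg (mul_nonneg (mul_nonneg (mul_nonneg
      (mul_nonneg h1 (abs_nonneg g)) hKp) (Real.rpow_nonneg hγ.le _))
      (Real.rpow_nonneg hM.le _)) (Real.rpow_nonneg hC₂ _)) hε0.le
  have hγδ1 : γ*δ ≤ 1 := by
    nlinarith [mul_nonneg hγ.le hδ0, c3.le]
  have hnum : γ*((γ*c)*δ)*L'^p*δ^(p+2) ≤ γ*c*L'^p*δ^(p+2) := by
    nlinarith [mul_nonneg (Real.rpow_nonneg hL'0 p) (Real.rpow_nonneg hδ0 (p+2)),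
      mul_le_mul_of_nonneg_left hγδ1 (mul_nonneg (mul_nonneg hγ.le hc)
        (mul_nonneg (Real.rpow_nonneg hL'0 p) (Real.rpow_nonneg hδ0 (p+2))))]
  have hmain : ‖φt ε t - φ ε t‖
      ≤ (1/(p+2) * |g| * Kp * γ^(p+1) * M^(p-1) * C₂^(p+2) * ε) * ‖φ ε t‖ := by
    calc ‖φt ε t - φ ε t‖
        ≤ (8/7)*(γ*((γ*c)*δ)*L'^p*δ^(p+2)/((p+1)*(p+2))) := hkey t ht
      _ ≤ (8/7)*(γ*c*L'^p*δ^(p+2)/((p+1)*(p+2))) := by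
          have hden : (0:ℝ) < (p+1)*(p+2) := by nlinarith
          exact mul_le_mul_of_nonneg_left ((div_le_div_iff_of_pos_right hden).mpr hnum) (by norm_num)
      _ ≤ (8/9)/(p+2)*c*(γ^p*γ)*(M^p)*(δ^(p+2)) :=
          EP_final_arith p c γ (δ^(p+2)) (γ^p) (M^p) (L'^p) hp hγ.le hc
            (Real.rpow_nonneg hδ0 _) (Real.rpow_nonneg hγ.le _)
            (Real.rpow_nonneg hM.le _) hLpb
      _ = (1/(p+2) * |g| * Kp * γ^(p+1) * M^(p-1) * C₂^(p+2) * ε) * ((8/9)*M) := by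
          rw [hδe, hgp1, hMp', hcdef]
          field_simp
      _ ≤ _ := mul_le_mul_of_nonneg_left halow2 hcoef0
  simpa using hmain
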